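/- arXiv:2003.08236 — 7 statements merged into one kernel-verified Lean document; each statement's English description precedes it below -/
import Mathlib

section
/- Let λ ≥ 1 and ε > 0. Two closed disks of radii r₁, r₂ with r₁² = (λ²+1)/4 - ε and r₂² = 1/4 cannot be placed in the plane so as to cover a closed λ×1 rectangle. -/
/-- The closed axis-aligned rectangle [0,w] × [0,h] in the Euclidean plane. -/
def rect (w h : ℝ) : Set (EuclideanSpace ℝ (Fin 2)) :=
  {p | p 0 ∈ Set.Icc 0 w ∧ p 1 ∈ Set.Icc 0 h}

private lemma dist_le_iff' (p q : EuclideanSpace ℝ (Fin 2)) (r : ℝ) (hr : 0 ≤ r) :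
    dist p q ≤ r ↔ (p 0 - q 0)^2 + (p 1 - q 1)^2 ≤ r^2 := by
  rw [EuclideanSpace.dist_eq, Fin.sum_univ_two, Real.dist_eq, Real.dist_eq, sq_abs, sq_abs]
  rw [show r = Real.sqrt (r^2) from (Real.sqrt_sq hr).symm]
  rw [Real.sqrt_le_sqrt_iff (by positivity)]
  rw [Real.sqrt_sq hr]

private lemma sq_zero' {x : ℝ} (h : x ^ 2 ≤ 0) : x = 0 :=
  pow_eq_zero_iff two_ne_zero |>.mp (le_antisymm h (sq_nonneg x))

/- Diagonal pairs cannot both lie in the big disk. -/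
private lemma diagAD (lam ε u v : ℝ) (hε : 0 < ε)
    (h1 : (0 - u)^2 + (0 - v)^2 ≤ (lam ^ 2 + 1) / 4 - ε)
    (h2 : (lam - u)^2 + (1 - v)^2 ≤ (lam ^ 2 + 1) / 4 - ε) : False := by
  nlinarith [sq_nonneg (lam - 2*u), sq_nonneg (1 - 2*v)]

private lemma diagBC (lam ε u v : ℝ) (hε : 0 < ε)
    (h1 : (lam - u)^2 + (0 - v)^2 ≤ (lam ^ 2 + 1) / 4 - ε)
    (h2 : (0 - u)^2 + (1 - v)^2 ≤ (lam ^ 2 + 1) / 4 - ε) : False := by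
  nlinarith [sq_nonneg (lam - 2*u), sq_nonneg (1 - 2*v)]

/- Center determination lemmas for the small disk. -/
private lemma centerAC (a b : ℝ)
    (h1 : (0 - a)^2 + (0 - b)^2 ≤ 1/4) (h2 : (0 - a)^2 + (1 - b)^2 ≤ 1/4) :
    a = 0 ∧ b = 1/2 := by
  have ha : a = 0 := sq_zero' (by nlinarith [sq_nonneg (2*b - 1)])
  have hb : (2*b - 1) = 0 := sq_zero' (by nlinarith [sq_nonneg a])
  exact ⟨ha, by linarith⟩

private lemma centerBD (lam a b : ℝ)
    (h1 : (lam - a)^2 + (0 - b)^2 ≤ 1/4) (h2 : (lam - a)^2 + (1 - b)^2 ≤ 1/4) :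
    a = lam ∧ b = 1/2 := by
  have ha : (lam - a) = 0 := sq_zero' (by nlinarith [sq_nonneg (2*b - 1)])
  have hb : (2*b - 1) = 0 := sq_zero' (by nlinarith [sq_nonneg (lam - a)])
  exact ⟨by linarith, by linarith⟩

private lemma centerAB (lam a b : ℝ) (hlam : 1 ≤ lam)
    (h1 : (0 - a)^2 + (0 - b)^2 ≤ 1/4) (h2 : (lam - a)^2 + (0 - b)^2 ≤ 1/4) :
    lam = 1 ∧ a = 1/2 ∧ b = 0 := by
  have hl1 : lam ≤ 1 := by nlinarith [sq_nonneg (lam - 2*a), sq_nonneg b]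
  have hl : lam = 1 := le_antisymm hl1 hlam
  subst hl
  have ha : (2*a - 1) = 0 := sq_zero' (by nlinarith [sq_nonneg b])
  have hb : b = 0 := sq_zero' (by nlinarith [sq_nonneg (2*a - 1)])
  exact ⟨rfl, by linarith, hb⟩

private lemma centerDC (lam a b : ℝ) (hlam : 1 ≤ lam)
    (h1 : (lam - a)^2 + (1 - b)^2 ≤ 1/4) (h2 : (0 - a)^2 + (1 - b)^2 ≤ 1/4) :
    lam = 1 ∧ a = 1/2 ∧ b = 1 := by
  have hl1 : lam ≤ 1 := by nlinarith [sq_nonneg (lam - 2*a), sq_nonneg (1 - b)]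
  have hl : lam = 1 := le_antisymm hl1 hlam
  subst hl
  have ha : (2*a - 1) = 0 := sq_zero' (by nlinarith [sq_nonneg (1 - b)])
  have hb : (1 - b) = 0 := sq_zero' (by nlinarith [sq_nonneg (2*a - 1)])
  exact ⟨rfl, by linarith, by linarith⟩

/- Final contradiction lemmas: two far-apart points forced into the big disk. -/
private lemma finAC (lam ε u v t : ℝ) (hε : 0 < ε) (ht0 : 0 < t) (htε : t * lam ≤ ε)
    (h1 : (t - u)^2 + (1 - v)^2 ≤ (lam ^ 2 + 1) / 4 - ε)
    (h2 : (lam - u)^2 + (0 - v)^2 ≤ (lam ^ 2 + 1) / 4 - ε) : False := by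
  nlinarith [sq_nonneg (t + lam - 2*u), sq_nonneg (1 - 2*v), mul_pos ht0 ht0]

private lemma finBD (lam ε u v t : ℝ) (hε : 0 < ε) (ht0 : 0 < t) (htε : t * lam ≤ ε)
    (h1 : ((lam - t) - u)^2 + (1 - v)^2 ≤ (lam ^ 2 + 1) / 4 - ε)
    (h2 : (0 - u)^2 + (0 - v)^2 ≤ (lam ^ 2 + 1) / 4 - ε) : False := by
  nlinarith [sq_nonneg ((lam - t) - 2*u), sq_nonneg (1 - 2*v), mul_pos ht0 ht0]

private lemma finAB (ε u v s : ℝ) (hε : 0 < ε) (hs0 : 0 < s) (hsε : s ≤ ε)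
    (h1 : (0 - u)^2 + (1 - v)^2 ≤ ((1:ℝ) ^ 2 + 1) / 4 - ε)
    (h2 : (1 - u)^2 + (s - v)^2 ≤ ((1:ℝ) ^ 2 + 1) / 4 - ε) : False := by
  nlinarith [sq_nonneg (1 - 2*u), sq_nonneg (1 + s - 2*v), mul_pos hs0 hs0]

private lemma finDC (ε u v s : ℝ) (hε : 0 < ε) (hs0 : 0 < s) (hsε : s ≤ ε)
    (h1 : (0 - u)^2 + (0 - v)^2 ≤ ((1:ℝ) ^ 2 + 1) / 4 - ε)
    (h2 : (1 - u)^2 + ((1 - s) - v)^2 ≤ ((1:ℝ) ^ 2 + 1) / 4 - ε) : False := by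
  nlinarith [sq_nonneg (1 - 2*u), sq_nonneg ((1 - s) - 2*v), mul_pos hs0 hs0]

/- Small-disk exclusion lemmas. -/
private lemma outAC (b t : ℝ) (ht0 : 0 < t)
    (h : (t - 0)^2 + (1 - b)^2 ≤ 1/4) (hb : b = 1/2) : False := by
  subst hb; nlinarith [mul_pos ht0 ht0]

private lemma outACB (lam b : ℝ) (hlam : 1 ≤ lam)
    (h : (lam - 0)^2 + (0 - b)^2 ≤ 1/4) (hb : b = 1/2) : False := by
  subst hb; nlinarith

set_option maxHeartbeats 1000000 in
/-- For λ ≥ 1 and ε > 0, two closed disks of radii r₁,r₂ with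
r₁² = (λ²+1)/4 − ε and r₂² = 1/4 cannot cover the λ×1 rectangle. -/
theorem stmt_4 (lam ε : ℝ) (hlam : 1 ≤ lam) (hε : 0 < ε)
    (r₁ r₂ : ℝ) (hr₁0 : 0 ≤ r₁) (hr₂0 : 0 ≤ r₂)
    (hr₁ : r₁ ^ 2 = (lam ^ 2 + 1) / 4 - ε) (hr₂ : r₂ ^ 2 = 1 / 4) :
    ¬ ∃ c₁ c₂ : EuclideanSpace ℝ (Fin 2),
        rect lam 1 ⊆ Metric.closedBall c₁ r₁ ∪ Metric.closedBall c₂ r₂ := by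
  rintro ⟨c₁, c₂, hcov⟩
  have hlam0 : (0:ℝ) < lam := by linarith
  set u := c₁ 0 with hu
  set v := c₁ 1 with hv
  set a := c₂ 0 with ha
  set b := c₂ 1 with hb
  have key : ∀ x y : ℝ, 0 ≤ x → x ≤ lam → 0 ≤ y → y ≤ 1 →
      (x - u)^2 + (y - v)^2 ≤ (lam ^ 2 + 1) / 4 - ε ∨ (x - a)^2 + (y - b)^2 ≤ 1/4 := by
    intro x y hx hx' hy hy'
    have hp : (!₂[x, y] : EuclideanSpace ℝ (Fin 2)) ∈ rect lam 1 := ⟨⟨hx, hx'⟩, ⟨hy, hy'⟩⟩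
    rcases hcov hp with h | h
    · left
      rw [Metric.mem_closedBall, dist_le_iff' _ _ _ hr₁0, hr₁] at h
      exact h
    · right
      rw [Metric.mem_closedBall, dist_le_iff' _ _ _ hr₂0, hr₂] at h
      exact h
  have hAD2 : (0 - a)^2 + (0 - b)^2 ≤ 1/4 ∨ (lam - a)^2 + (1 - b)^2 ≤ 1/4 := by
    rcases key 0 0 le_rfl hlam0.le le_rfl zero_le_one with h | h
    · rcases key lam 1 hlam0.le le_rfl zero_le_one le_rfl with h' | h'
      · exact (diagAD lam ε u v hε h h').elim
      · exact Or.inr h'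
    · exact Or.inl h
  have hBC2 : (lam - a)^2 + (0 - b)^2 ≤ 1/4 ∨ (0 - a)^2 + (1 - b)^2 ≤ 1/4 := by
    rcases key lam 0 hlam0.le le_rfl le_rfl zero_le_one with h | h
    · rcases key 0 1 le_rfl hlam0.le zero_le_one le_rfl with h' | h'
      · exact (diagBC lam ε u v hε h h').elim
      · exact Or.inr h'
    · exact Or.inl h
  rcases hAD2 with hA2 | hD2 <;> rcases hBC2 with hB2 | hC2
  · -- A and B in small disk
    obtain ⟨hl, ha0, hb0⟩ := centerAB lam a b hlam hA2 hB2
    subst hl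
    set s := min ε 1 with hsdef
    have hs0 : 0 < s := lt_min hε one_pos
    have hsε : s ≤ ε := min_le_left _ _
    have hs1 : s ≤ 1 := min_le_right _ _
    have hC1 : (0 - u)^2 + (1 - v)^2 ≤ ((1:ℝ) ^ 2 + 1) / 4 - ε := by
      rcases key 0 1 le_rfl zero_le_one zero_le_one le_rfl with h | h
      · exact h
      · rw [ha0, hb0] at h; nlinarith
    have hQ1 : (1 - u)^2 + (s - v)^2 ≤ ((1:ℝ) ^ 2 + 1) / 4 - ε := by
      rcases key 1 s zero_le_one le_rfl hs0.le hs1 with h | h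
      · exact h
      · rw [ha0, hb0] at h; nlinarith [mul_pos hs0 hs0]
    exact finAB ε u v s hε hs0 hsε hC1 hQ1
  · -- A and C in small disk
    obtain ⟨ha0, hb0⟩ := centerAC a b hA2 hC2
    set t := min (ε / lam) lam with htdef
    have ht0 : 0 < t := lt_min (by positivity) hlam0
    have htlam : t ≤ lam := min_le_right _ _
    have htε : t * lam ≤ ε := (le_div_iff₀ hlam0).mp (min_le_left _ _)
    have hP1 : (t - u)^2 + (1 - v)^2 ≤ (lam ^ 2 + 1) / 4 - ε := by
      rcases key t 1 ht0.le htlam zero_le_one le_rfl with h | h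
      · exact h
      · rw [ha0] at h; exact (outAC b t ht0 h hb0).elim
    have hB1 : (lam - u)^2 + (0 - v)^2 ≤ (lam ^ 2 + 1) / 4 - ε := by
      rcases key lam 0 hlam0.le le_rfl le_rfl zero_le_one with h | h
      · exact h
      · rw [ha0] at h; exact (outACB lam b hlam h hb0).elim
    exact finAC lam ε u v t hε ht0 htε hP1 hB1
  · -- D and B in small disk
    obtain ⟨ha0, hb0⟩ := centerBD lam a b hB2 hD2
    set t := min (ε / lam) lam with htdef
    have ht0 : 0 < t := lt_min (by positivity) hlam0
    have htlam : t ≤ lam := min_le_right _ _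
    have htε : t * lam ≤ ε := (le_div_iff₀ hlam0).mp (min_le_left _ _)
    have hP1 : ((lam - t) - u)^2 + (1 - v)^2 ≤ (lam ^ 2 + 1) / 4 - ε := by
      rcases key (lam - t) 1 (by linarith) (by linarith) zero_le_one le_rfl with h | h
      · exact h
      · rw [ha0, hb0] at h; nlinarith [mul_pos ht0 ht0]
    have hA1 : (0 - u)^2 + (0 - v)^2 ≤ (lam ^ 2 + 1) / 4 - ε := by
      rcases key 0 0 le_rfl hlam0.le le_rfl zero_le_one with h | h
      · exact h
      · rw [ha0, hb0] at h; nlinarith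
    exact finBD lam ε u v t hε ht0 htε hP1 hA1
  · -- D and C in small disk
    obtain ⟨hl, ha0, hb0⟩ := centerDC lam a b hlam hD2 hC2
    subst hl
    set s := min ε 1 with hsdef
    have hs0 : 0 < s := lt_min hε one_pos
    have hsε : s ≤ ε := min_le_left _ _
    have hs1 : s ≤ 1 := min_le_right _ _
    have hA1 : (0 - u)^2 + (0 - v)^2 ≤ ((1:ℝ) ^ 2 + 1) / 4 - ε := by
      rcases key 0 0 le_rfl zero_le_one le_rfl zero_le_one with h | h
      · exact h
      · rw [ha0, hb0] at h; nlinarith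
    have hQ1 : (1 - u)^2 + ((1 - s) - v)^2 ≤ ((1:ℝ) ^ 2 + 1) / 4 - ε := by
      rcases key 1 (1 - s) zero_le_one le_rfl (by linarith) (by linarith) with h | h
      · exact h
      · rw [ha0, hb0] at h; nlinarith [mul_pos hs0 hs0]
    exact finDC ε u v s hε hs0 hsε hA1 hQ1
end

section
/- The function d*(λ) = max(3(λ²/16 + 5/32 + 9/(256λ²)), (λ²+2)/4)/λ on [1,∞) is strictly decreasing on [1, sqrt 2] and strictly increasing on [sqrt 2, ∞), with minimum value d*(sqrt 2) = 1/sqrt 2. -/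
/-- The normalized critical covering density of a λ×1 rectangle. -/
noncomputable def dStar (l : ℝ) : ℝ :=
  max (3 * (l ^ 2 / 16 + 5 / 32 + 9 / (256 * l ^ 2))) ((l ^ 2 + 2) / 4) / l

lemma key1 (a b : ℝ) (ha : 1 ≤ a) (hab : a < b) (hb2 : b ^ 2 ≤ 2) :
    3 * (b ^ 2 / 16 + 5 / 32 + 9 / (256 * b ^ 2)) * a <
    3 * (a ^ 2 / 16 + 5 / 32 + 9 / (256 * a ^ 2)) * b := by
  have ha0 : 0 < a := by linarith
  have hb0 : 0 < b := by linarith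
  have hab2 : a * b < 2 := by nlinarith
  have ha2 : (256 : ℝ) * a ^ 2 ≠ 0 := by positivity
  have hb2' : (256 : ℝ) * b ^ 2 ≠ 0 := by positivity
  rw [← sub_pos]
  have key : 3 * (a ^ 2 / 16 + 5 / 32 + 9 / (256 * a ^ 2)) * b -
      3 * (b ^ 2 / 16 + 5 / 32 + 9 / (256 * b ^ 2)) * a =
      ((b - a) * (24 * (a ^ 2 * b ^ 2 * (5 - 2 * (a * b)))) +
        (b - a) * (27 * (a ^ 2 + a * b + b ^ 2))) / (256 * a ^ 2 * b ^ 2) := by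
    field_simp
    ring
  rw [key]
  apply div_pos
  · have h1 : 0 < (b - a) * (24 * (a ^ 2 * b ^ 2 * (5 - 2 * (a * b)))) := by
      apply mul_pos (by linarith)
      have h5 : (0:ℝ) < 5 - 2 * (a * b) := by linarith
      have := mul_pos (show (0:ℝ) < a ^ 2 * b ^ 2 by positivity) h5
      linarith
    have h2 : 0 < (b - a) * (27 * (a ^ 2 + a * b + b ^ 2)) := by
      apply mul_pos (by linarith)
      have : (0:ℝ) < a ^ 2 + a * b + b ^ 2 := by positivity
      linarith
    linarith
  · positivity

lemma key2 (a b : ℝ) (ha : 1 ≤ a) (hab : a < b) (hb2 : b ^ 2 ≤ 2) :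
    (b ^ 2 + 2) / 4 * a < (a ^ 2 + 2) / 4 * b := by
  have hab2 : a * b < 2 := by nlinarith
  nlinarith [mul_pos (show (0:ℝ) < b - a by linarith) (show (0:ℝ) < 2 - a * b by linarith)]

/-- d* is strictly decreasing on [1,√2], strictly increasing on [√2,∞), with
minimum value d*(√2) = 1/√2. -/
theorem stmt_8 :
    StrictAntiOn dStar (Set.Icc 1 (Real.sqrt 2)) ∧
    StrictMonoOn dStar (Set.Ici (Real.sqrt 2)) ∧
    dStar (Real.sqrt 2) = 1 / Real.sqrt 2 := by
  have hs2 : Real.sqrt 2 ^ 2 = 2 := Real.sq_sqrt (by norm_num)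
  have hs2pos : (0:ℝ) < Real.sqrt 2 := Real.sqrt_pos.2 (by norm_num)
  refine ⟨?_, ?_, ?_⟩
  · intro a ha b hb hab
    have ha1 : 1 ≤ a := ha.1
    have ha0 : 0 < a := by linarith
    have hb0 : 0 < b := by linarith
    have hb2 : b ^ 2 ≤ 2 := by
      have h := mul_self_le_mul_self hb0.le hb.2
      nlinarith [hs2]
    have h1 := key1 a b ha1 hab hb2
    have h2 := key2 a b ha1 hab hb2
    unfold dStar
    rw [div_lt_div_iff₀ hb0 ha0]
    rw [max_mul_of_nonneg _ _ ha0.le, max_mul_of_nonneg _ _ hb0.le]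
    apply max_lt
    · exact lt_of_lt_of_le h1 (le_max_left _ _)
    · exact lt_of_lt_of_le h2 (le_max_right _ _)
  · intro a ha b hb hab
    have ha0 : 0 < a := lt_of_lt_of_le hs2pos ha
    have hb0 : 0 < b := lt_of_lt_of_le hs2pos hb
    have ha2 : 2 ≤ a ^ 2 := by
      have h := mul_self_le_mul_self hs2pos.le (ha : Real.sqrt 2 ≤ a)
      nlinarith [hs2]
    have hb2' : 2 ≤ b ^ 2 := by
      have h := mul_self_le_mul_self hs2pos.le (hb : Real.sqrt 2 ≤ b)
      nlinarith [hs2]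
    have hmax : ∀ l : ℝ, 0 < l → 2 ≤ l ^ 2 →
        max (3 * (l ^ 2 / 16 + 5 / 32 + 9 / (256 * l ^ 2))) ((l ^ 2 + 2) / 4)
          = (l ^ 2 + 2) / 4 := by
      intro l hl0 hl2
      apply max_eq_right
      rw [← sub_nonneg]
      have key : (l ^ 2 + 2) / 4 - 3 * (l ^ 2 / 16 + 5 / 32 + 9 / (256 * l ^ 2)) =
          (16 * l ^ 4 + 8 * l ^ 2 - 27) / (256 * l ^ 2) := by
        have hl2' : (256 : ℝ) * l ^ 2 ≠ 0 := by positivity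
        field_simp
        ring
      rw [key]
      apply div_nonneg _ (by positivity)
      nlinarith [sq_nonneg (l ^ 2 - 2)]
    unfold dStar
    rw [hmax a ha0 ha2, hmax b hb0 hb2', div_lt_div_iff₀ ha0 hb0]
    have hab2 : 2 < a * b := by nlinarith
    nlinarith [mul_pos (show (0:ℝ) < b - a by linarith) (show (0:ℝ) < a * b - 2 by linarith)]
  · unfold dStar
    rw [hs2]
    norm_num
end

section
/- The unique λ > 1 satisfying (λ² + 2)/(4λ) = 195/256 is λ̄ = (195 + sqrt 5257)/128, and for all λ with 1 ≤ λ ≤ λ̄ one has max(3(λ²/16 + 5/32 + 9/(256λ²)), (λ²+2)/4) ≤ (195/256)·λ. -/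
/-- λ̄ = (195+√5257)/128 is the unique λ > 1 with (λ²+2)/(4λ) = 195/256, and
for 1 ≤ λ ≤ λ̄ the critical covering weight is at most (195/256)λ. -/
theorem stmt_9 :
    (1 < (195 + Real.sqrt 5257) / 128 ∧
      (((195 + Real.sqrt 5257) / 128) ^ 2 + 2) / (4 * ((195 + Real.sqrt 5257) / 128)) =
        195 / 256) ∧
    (∀ l : ℝ, 1 < l → (l ^ 2 + 2) / (4 * l) = 195 / 256 →
      l = (195 + Real.sqrt 5257) / 128) ∧
    (∀ l : ℝ, 1 ≤ l → l ≤ (195 + Real.sqrt 5257) / 128 →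
      max (3 * (l ^ 2 / 16 + 5 / 32 + 9 / (256 * l ^ 2))) ((l ^ 2 + 2) / 4) ≤
        195 / 256 * l) := by
  set s := Real.sqrt 5257 with hs
  have hs2 : s ^ 2 = 5257 := Real.sq_sqrt (by norm_num)
  have hs0 : 0 ≤ s := Real.sqrt_nonneg _
  have hslb : 67 < s := by nlinarith
  have hsub : s < 73 := by nlinarith
  have hb1 : (1 : ℝ) < (195 + s) / 128 := by nlinarith
  have hbpos : (0 : ℝ) < (195 + s) / 128 := by linarith
  refine ⟨⟨hb1, ?_⟩, ?_, ?_⟩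
  · rw [div_eq_div_iff (by positivity) (by norm_num)]
    nlinarith
  · intro l hl hEq
    have hl0 : (0 : ℝ) < l := by linarith
    rw [div_eq_div_iff (by positivity) (by norm_num)] at hEq
    have key : (128 * l - 195) ^ 2 = s ^ 2 := by nlinarith
    have h2 : 128 * l - 195 = s ∨ 128 * l - 195 = -s := sq_eq_sq_iff_eq_or_eq_neg.mp key
    rcases h2 with h | h
    · field_simp
      linarith
    · exfalso
      nlinarith
  · intro l hl1 hl2
    have hl0 : (0 : ℝ) < l := by linarith
    have hub' : 128 * l ≤ 195 + s := by
      rw [le_div_iff₀ (by norm_num : (0:ℝ) < 128)] at hl2; linarith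
    have hl3 : l < 3 := by nlinarith
    have hquad : 64 * l ^ 2 - 195 * l + 128 ≤ 0 := by
      nlinarith [sq_nonneg (128 * l - 195 - s), sq_nonneg (128 * l - 195 + s)]
    apply max_le
    · have hcube : 48 * l ^ 3 - 147 * l ^ 2 - 27 * l - 27 < 0 := by nlinarith
      have hquart : 48 * l ^ 4 - 195 * l ^ 3 + 120 * l ^ 2 + 27 ≤ 0 := by
        nlinarith [mul_nonneg (sub_nonneg.2 hl1) hl0.le]
      have expand : 3 * (l ^ 2 / 16 + 5 / 32 + 9 / (256 * l ^ 2)) =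
          (48 * l ^ 4 + 120 * l ^ 2 + 27) / (256 * l ^ 2) := by
        field_simp
        ring
      rw [expand, div_le_iff₀ (by positivity : (0:ℝ) < 256 * l ^ 2)]
      nlinarith
    · linarith [hquad]
end

section
/- Let E > 1/2, s = sqrt(4E² − 2E·sqrt(4E²−1)), and q₁ ≥ q_i > 0 with q_i ≥ s·q₁. If a disk of radius q_i covers an inscribed rectangle of width sqrt(2)·q₁ and height h_i = sqrt(4q_i² − 2q₁²), then q_i² ≤ E · sqrt(2)·q₁ · h_i. -/
/-- Wall-building coefficient bound: for E > 1/2, s = √(4E² − 2E√(4E²−1)),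
and s·q₁ ≤ qᵢ ≤ q₁, a disk of radius qᵢ covering an inscribed rectangle of
width √2·q₁ and height hᵢ = √(4qᵢ² − 2q₁²) has weight at most E times the
rectangle area. -/
theorem stmt_11 (E q₁ qi : ℝ) (hE : 1 / 2 < E) (hq₁ : 0 < qi) (hle : qi ≤ q₁)
    (hs : Real.sqrt (4 * E ^ 2 - 2 * E * Real.sqrt (4 * E ^ 2 - 1)) * q₁ ≤ qi) :
    qi ^ 2 ≤ E * (Real.sqrt 2 * q₁) * Real.sqrt (4 * qi ^ 2 - 2 * q₁ ^ 2) := by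
  have hq1 : 0 < q₁ := lt_of_lt_of_le hq₁ hle
  have hE0 : 0 < E := by linarith
  set t := Real.sqrt (4 * E ^ 2 - 1) with ht
  have ht0 : 0 ≤ t := Real.sqrt_nonneg _
  have ht2 : t ^ 2 = 4 * E ^ 2 - 1 := Real.sq_sqrt (by nlinarith)
  have h2Et : 2 * E * t ≤ 4 * E ^ 2 - 1 / 2 := by nlinarith [sq_nonneg (2 * E - t)]
  have ha0 : 0 ≤ 4 * E ^ 2 - 2 * E * t := by linarith
  have hsq : (4 * E ^ 2 - 2 * E * t) * q₁ ^ 2 ≤ qi ^ 2 := by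
    have h1 : 0 ≤ Real.sqrt (4 * E ^ 2 - 2 * E * t) * q₁ := by positivity
    have h2 := mul_self_le_mul_self h1 hs
    have h3 : Real.sqrt (4 * E ^ 2 - 2 * E * t) * Real.sqrt (4 * E ^ 2 - 2 * E * t)
        = 4 * E ^ 2 - 2 * E * t := Real.mul_self_sqrt ha0
    nlinarith [h2, h3]
  have hpos : 0 ≤ 4 * qi ^ 2 - 2 * q₁ ^ 2 := by nlinarith
  set X := Real.sqrt (4 * qi ^ 2 - 2 * q₁ ^ 2) with hX
  have hX0 : 0 ≤ X := Real.sqrt_nonneg _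
  have hX2 : X ^ 2 = 4 * qi ^ 2 - 2 * q₁ ^ 2 := Real.sq_sqrt hpos
  have hr2 : Real.sqrt 2 ^ 2 = 2 := Real.sq_sqrt (by norm_num)
  have hr20 : 0 ≤ Real.sqrt 2 := Real.sqrt_nonneg _
  -- key: qi⁴ ≤ 2E²q₁²X²
  have key : (qi ^ 2) ^ 2 ≤ 2 * E ^ 2 * q₁ ^ 2 * X ^ 2 := by
    rw [hX2]
    have ht4 : E ^ 2 * t ^ 2 * q₁ ^ 4 = E ^ 2 * (4 * E ^ 2 - 1) * q₁ ^ 4 := by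
      rw [ht2]
    nlinarith [mul_nonneg (sub_nonneg.2 hsq)
      (sub_nonneg.2 (show qi ^ 2 ≤ (4 * E ^ 2 + 2 * E * t) * q₁ ^ 2 by
        nlinarith [mul_pos hq1 hq1])), ht4]
  have hB0 : 0 ≤ E * (Real.sqrt 2 * q₁) * X := by positivity
  nlinarith [key, hB0, sq_nonneg (qi ^ 2 - E * (Real.sqrt 2 * q₁) * X),
    mul_pos (mul_pos hq₁ hq₁) (mul_pos hq₁ hq₁), hr2]
end

section
/- Let λ ≥ λ̄ = (195+sqrt 5257)/128, r̄² = (195·λ̄)/128 − 11/4, and r₁ ≥ r̄ with r₁² ≤ (λ²+1)/4. Write x = λ − 2·sqrt(r₁² − 1/4). If x ≥ λ̄, then ((λ²+2)/4) − r₁² ≥ (x²+2)/4. -/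
/-- Case (a) of the Large Disk routine: with λ ≥ λ̄, r̄² = 195λ̄/128 − 11/4,
r₁ ≥ r̄, r₁² ≤ (λ²+1)/4 and x = λ − 2√(r₁²−1/4) ≥ λ̄, the leftover weight
(λ²+2)/4 − r₁² is at least (x²+2)/4. -/
theorem stmt_16 (lam r₁ : ℝ)
    (hlam : (195 + Real.sqrt 5257) / 128 ≤ lam)
    (hr₁ : Real.sqrt (195 * ((195 + Real.sqrt 5257) / 128) / 128 - 11 / 4) ≤ r₁)
    (hr₁' : r₁ ^ 2 ≤ (lam ^ 2 + 1) / 4)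
    (hx : (195 + Real.sqrt 5257) / 128 ≤ lam - 2 * Real.sqrt (r₁ ^ 2 - 1 / 4)) :
    (lam ^ 2 + 2) / 4 - r₁ ^ 2 ≥
      ((lam - 2 * Real.sqrt (r₁ ^ 2 - 1 / 4)) ^ 2 + 2) / 4 := by
  have h72 : (72:ℝ) ≤ Real.sqrt 5257 := by
    nlinarith [Real.sq_sqrt (show (0:ℝ) ≤ 5257 by norm_num), Real.sqrt_nonneg 5257]
  set L : ℝ := (195 + Real.sqrt 5257) / 128 with hL
  have hL2 : (2:ℝ) ≤ L := by rw [hL]; linarith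
  have hA : (0:ℝ) ≤ 195 * L / 128 - 11 / 4 := by rw [hL]; nlinarith
  have hr0 : 0 ≤ r₁ := le_trans (Real.sqrt_nonneg _) hr₁
  have hr2 : 195 * L / 128 - 11 / 4 ≤ r₁ ^ 2 := by
    nlinarith [Real.sq_sqrt hA, Real.sqrt_nonneg (195 * L / 128 - 11 / 4)]
  have hq : (1:ℝ)/16 ≤ r₁ ^ 2 - 1/4 := by rw [hL] at hr2; nlinarith
  set s : ℝ := Real.sqrt (r₁ ^ 2 - 1 / 4) with hs
  have hs2 : s ^ 2 = r₁ ^ 2 - 1/4 := Real.sq_sqrt (by linarith)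
  have hs0 : 0 ≤ s := Real.sqrt_nonneg _
  have hs14 : (1:ℝ)/4 ≤ s := by nlinarith
  have hlge : 2 * s + L ≤ lam := by linarith
  nlinarith [mul_le_mul_of_nonneg_right hlge hs0, mul_le_mul_of_nonneg_right hL2 hs0]
end

section
/- Let λ ≥ λ̄ = (195+sqrt 5257)/128, r̄ = sqrt((195·λ̄)/128 − 11/4), and r₁ ≥ r̄. Write x = λ − 2·sqrt(r₁² − 1/4) and suppose 1/λ̄ ≤ x < λ̄. Then ((λ²+2)/4) − r₁² ≥ (195/256)·x. -/
/-- Case (b) of the Large Disk routine: with λ ≥ λ̄, r₁ ≥ r̄ and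
x = λ − 2√(r₁²−1/4) satisfying 1/λ̄ ≤ x < λ̄, the leftover weight
(λ²+2)/4 − r₁² is at least (195/256)x. -/
theorem stmt_17 (lam r₁ : ℝ)
    (hlam : (195 + Real.sqrt 5257) / 128 ≤ lam)
    (hr₁ : Real.sqrt (195 * ((195 + Real.sqrt 5257) / 128) / 128 - 11 / 4) ≤ r₁)
    (hx₁ : 1 / ((195 + Real.sqrt 5257) / 128) ≤ lam - 2 * Real.sqrt (r₁ ^ 2 - 1 / 4))
    (hx₂ : lam - 2 * Real.sqrt (r₁ ^ 2 - 1 / 4) < (195 + Real.sqrt 5257) / 128) :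
    (lam ^ 2 + 2) / 4 - r₁ ^ 2 ≥
      195 / 256 * (lam - 2 * Real.sqrt (r₁ ^ 2 - 1 / 4)) := by
  have h57sq : Real.sqrt 5257 ^ 2 = 5257 := Real.sq_sqrt (by norm_num)
  have h57nn : (0:ℝ) ≤ Real.sqrt 5257 := Real.sqrt_nonneg _
  have h57lb : (72:ℝ) ≤ Real.sqrt 5257 := by nlinarith
  -- the inner argument of r̄ is nonneg
  have hAnn : (0:ℝ) ≤ 195 * ((195 + Real.sqrt 5257) / 128) / 128 - 11 / 4 := by
    nlinarith
  have hrbarsq : Real.sqrt (195 * ((195 + Real.sqrt 5257) / 128) / 128 - 11 / 4) ^ 2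
      = 195 * ((195 + Real.sqrt 5257) / 128) / 128 - 11 / 4 := Real.sq_sqrt hAnn
  have hrbarnn : (0:ℝ) ≤ Real.sqrt (195 * ((195 + Real.sqrt 5257) / 128) / 128 - 11 / 4) :=
    Real.sqrt_nonneg _
  have hr₁sq : r₁ ^ 2 ≥ 195 * ((195 + Real.sqrt 5257) / 128) / 128 - 11 / 4 := by
    nlinarith
  have hkey : r₁ ^ 2 - 1 / 4 ≥ 1764 / 10000 := by nlinarith
  set s := Real.sqrt (r₁ ^ 2 - 1 / 4) with hs
  have hsnn : (0:ℝ) ≤ s := Real.sqrt_nonneg _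
  have hssq : s ^ 2 = r₁ ^ 2 - 1 / 4 := Real.sq_sqrt (by linarith)
  have hsge : s ≥ 42 / 100 := by nlinarith
  have hxpos : (0:ℝ) < lam - 2 * s := by
    have h1 : (0:ℝ) < 1 / ((195 + Real.sqrt 5257) / 128) := by positivity
    linarith
  nlinarith [sq_nonneg (lam - 2 * s - 2187 / 3200), mul_nonneg hxpos.le (by linarith : s - 42/100 ≥ 0)]
end

section
/- Let λ ≥ λ̄ = (195+sqrt 5257)/128 and suppose r₁² ≤ r̄² = (195·λ̄)/128 − 11/4. If disks with total weight (λ²+2)/4 are split into two groups whose weights differ by at most r₁², then the lighter group has weight at least (λ²+2)/8 − r̄²/2, and the corresponding proportional share of the width, ω₂ = λ·W₂/W with W = (λ²+2)/4, satisfies ω₂ ≥ 1/λ ; i.e., λ/2 − 2λ·((195·λ̄)/128 − 11/4)/(λ²+2) ≥ 1/λ. -/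
/-- Split Cover inequality: for λ ≥ λ̄ and a split of total weight
W = (λ²+2)/4 into W₁ ≥ W₂ with W₁ − W₂ ≤ r₁² ≤ r̄² = 195λ̄/128 − 11/4, the
lighter group has weight at least (λ²+2)/8 − r̄²/2, the proportional width
ω₂ = λ·W₂/W is at least 1/λ, and indeed
λ/2 − 2λ·(195λ̄/128 − 11/4)/(λ²+2) ≥ 1/λ. -/
theorem stmt_19 (lam r₁ W₁ W₂ : ℝ)
    (hlam : (195 + Real.sqrt 5257) / 128 ≤ lam)
    (hr₁ : r₁ ^ 2 ≤ 195 * ((195 + Real.sqrt 5257) / 128) / 128 - 11 / 4)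
    (hsum : W₁ + W₂ = (lam ^ 2 + 2) / 4)
    (horder : W₂ ≤ W₁)
    (hdiff : W₁ - W₂ ≤ r₁ ^ 2) :
    W₂ ≥ (lam ^ 2 + 2) / 8 - (195 * ((195 + Real.sqrt 5257) / 128) / 128 - 11 / 4) / 2 ∧
    lam * W₂ / ((lam ^ 2 + 2) / 4) ≥ 1 / lam ∧
    lam / 2 - 2 * lam * (195 * ((195 + Real.sqrt 5257) / 128) / 128 - 11 / 4) /
        (lam ^ 2 + 2) ≥ 1 / lam := by
  set s := Real.sqrt 5257 with hsdef
  have hs2 : s ^ 2 = 5257 := Real.sq_sqrt (by norm_num)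
  have hs72 : (72 : ℝ) ≤ s := by
    have := Real.sqrt_le_sqrt (show (5184:ℝ) ≤ 5257 by norm_num)
    calc (72:ℝ) = Real.sqrt 5184 := by
          rw [show (5184:ℝ) = 72^2 by norm_num, Real.sqrt_sq] <;> norm_num
      _ ≤ s := this
  have hs73 : s ≤ 73 := by
    have := Real.sqrt_le_sqrt (show (5257:ℝ) ≤ 5329 by norm_num)
    calc s ≤ Real.sqrt 5329 := this
      _ = 73 := by rw [show (5329:ℝ) = 73^2 by norm_num, Real.sqrt_sq] <;> norm_num
  have hlam2 : (2:ℝ) ≤ lam := by nlinarith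
  have hlampos : (0:ℝ) < lam := by linarith
  have hW2 : W₂ ≥ (lam ^ 2 + 2) / 8 - (195 * ((195 + s) / 128) / 128 - 11 / 4) / 2 := by
    linarith
  set rb := 195 * ((195 + s) / 128) / 128 - 11 / 4 with hrbdef
  clear_value rb
  have hrb1 : rb ≤ 1/2 := by rw [hrbdef]; nlinarith
  have hrb0 : 0 ≤ rb := by rw [hrbdef]; nlinarith
  have hl4 : (4:ℝ) ≤ lam ^ 2 := by nlinarith
  have key : lam ^ 4 - 4 * lam ^ 2 * rb - 4 ≥ 0 := by
    have hA : 0 ≤ lam ^ 4 - 4 * lam ^ 2 + 4 := by nlinarith [sq_nonneg (lam ^ 2 - 2)]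
    have hC : 0 ≤ lam ^ 2 * (1 / 2 - rb) := mul_nonneg (sq_nonneg lam) (by linarith)
    have hC' : lam ^ 2 * rb ≤ lam ^ 2 / 2 := by nlinarith
    linarith
  have hpos : (0:ℝ) < lam^2 + 2 := by positivity
  refine ⟨hW2, ?_, ?_⟩
  · rw [ge_iff_le, div_le_div_iff₀ hlampos (by positivity)]
    nlinarith [mul_nonneg (le_of_lt hlampos) (le_of_lt hlampos)]
  · rw [ge_iff_le, le_sub_iff_add_le, div_add_div _ _ (ne_of_gt hlampos) (ne_of_gt hpos), div_le_div_iff₀ (by positivity) (by norm_num : (0:ℝ) < 2)]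
    nlinarith [key, mul_nonneg (sq_nonneg lam) hrb0]
end
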